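/- Let n ≥ 2, let S ⊆ Z^n, and let Φ(x) = Σ_{i=1}^n φ(x_i) with φ : Z → R positive and satisfying φ(k+1) ≥ n·φ(k) for all k ∈ Z. Then the set of decreasingly minimal elements of S equals the set of minimizers of Φ over S, i.e., decmin(S) = argmin(Φ | S). -/

import Mathlib

open Finset

/-- Descending rearrangement of a tuple. -/
noncomputable def sortDesc {n : ℕ} {α : Type*} [LinearOrder α] (x : Fin n → α) : Fin n → α :=
  x ∘ (Tuple.sort (fun i => OrderDual.toDual (x i)))

/-- `x <_dec y` : strict lexicographic comparison of descending rearrangements. -/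
noncomputable def decLT {n : ℕ} {α : Type*} [LinearOrder α] (x y : Fin n → α) : Prop :=
  ∃ i : Fin n, (∀ j : Fin n, j < i → sortDesc x j = sortDesc y j) ∧ sortDesc x i < sortDesc y i

/-- `x ≤_dec y` : lexicographic comparison of descending rearrangements. -/
noncomputable def decLE {n : ℕ} {α : Type*} [LinearOrder α] (x y : Fin n → α) : Prop :=
  sortDesc x = sortDesc y ∨ decLT x y

/-- `x` is a decreasingly minimal (dec-min) element of `S`. -/
noncomputable def DecMin {n : ℕ} (S : Set (Fin n → ℤ)) (x : Fin n → ℤ) : Prop :=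
  x ∈ S ∧ ∀ y ∈ S, decLE x y

/-- Embedding of integer vectors into real vectors. -/
def castVec {n : ℕ} (z : Fin n → ℤ) : Fin n → ℝ := fun i => (z i : ℝ)

/-- `S ⊆ ℤⁿ` is an integrally convex set: every point of `conv S` lies in the
convex hull of the points of `S` in its integral neighborhood. -/
def IntConvexSet {n : ℕ} (S : Set (Fin n → ℤ)) : Prop :=
  S.Nonempty ∧ ∀ x : Fin n → ℝ,
    x ∈ convexHull ℝ (castVec '' S) →
    x ∈ convexHull ℝ (castVec '' {z ∈ S | ∀ i, |x i - (z i : ℝ)| < 1})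

lemma sortDesc_anti {n : ℕ} {α : Type*} [LinearOrder α] (x : Fin n → α) :
    Antitone (sortDesc x) := fun _ _ hij =>
  Tuple.monotone_sort (fun i => OrderDual.toDual (x i)) hij

lemma sum_sortDesc {n : ℕ} (x : Fin n → ℤ) (φ : ℤ → ℝ) :
    ∑ i, φ (sortDesc x i) = ∑ i, φ (x i) :=
  Equiv.sum_comp (Tuple.sort fun i => OrderDual.toDual (x i)) (fun i => φ (x i))

section
variable {n : ℕ} (hn : 2 ≤ n) {φ : ℤ → ℝ} (hpos : ∀ k : ℤ, 0 < φ k)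
  (hrap : ∀ k : ℤ, (n : ℝ) * φ k ≤ φ (k + 1))

include hn hpos hrap

lemma phi_strictMono : StrictMono φ := by
  apply strictMono_int_of_lt_succ
  intro k
  have h2 : (2 : ℝ) * φ k ≤ (n : ℝ) * φ k := by
    apply mul_le_mul_of_nonneg_right _ (hpos k).le
    exact_mod_cast hn
  have := hrap k
  nlinarith [hpos k]

lemma phi_mono : Monotone φ := (phi_strictMono hn hpos hrap).monotone

/-- Key lemma: strict dec order implies strict sum inequality. -/
lemma sum_lt_of_decLT {x y : Fin n → ℤ} (h : decLT x y) :
    ∑ i, φ (x i) < ∑ i, φ (y i) := by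
  obtain ⟨i, heq, hlt⟩ := h
  set d := sortDesc x with hd
  set e := sortDesc y with he
  rw [← sum_sortDesc x φ, ← sum_sortDesc y φ]
  have hsplit : ∀ z : Fin n → ℤ,
      ∑ j, φ (z j) = ∑ j ∈ univ.filter (· < i), φ (z j)
        + ∑ j ∈ univ.filter (¬ · < i), φ (z j) := by
    intro z; rw [Finset.sum_filter_add_sum_filter_not]
  rw [hsplit d, hsplit e]
  have h1 : ∑ j ∈ univ.filter (· < i), φ (d j) = ∑ j ∈ univ.filter (· < i), φ (e j) := by
    apply Finset.sum_congr rfl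
    intro j hj
    rw [heq j (by simpa using hj)]
  rw [h1]
  apply add_lt_add_right
  set T := univ.filter (¬ · < i) with hT
  have hiT : i ∈ T := by simp [hT]
  have hmem : ∀ j ∈ T, i ≤ j := by intro j hj; simpa [hT] using hj
  have hcard : T.card ≤ n := le_trans (Finset.card_le_card (Finset.subset_univ T)) (by simp)
  -- bound on d side
  have hdb : ∀ j ∈ T, φ (d j) ≤ φ (d i) :=
    fun j hj => phi_mono hn hpos hrap (sortDesc_anti x (hmem j hj))
  have hdsum : ∑ j ∈ T, φ (d j) ≤ (T.card : ℝ) * φ (d i) := by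
    calc ∑ j ∈ T, φ (d j) ≤ ∑ _j ∈ T, φ (d i) := Finset.sum_le_sum hdb
    _ = (T.card : ℝ) * φ (d i) := by rw [Finset.sum_const, nsmul_eq_mul]
  have hstep : (n : ℝ) * φ (d i) ≤ φ (e i) := by
    have h1 : d i ≤ e i - 1 := by omega
    have h2 : φ (d i) ≤ φ (e i - 1) := phi_mono hn hpos hrap h1
    have h3 : (n : ℝ) * φ (e i - 1) ≤ φ (e i - 1 + 1) := hrap _
    have h4 : (n : ℝ) * φ (d i) ≤ (n : ℝ) * φ (e i - 1) := by
      apply mul_le_mul_of_nonneg_left h2 (by positivity)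
    simpa using h4.trans h3
  have hesum : φ (e i) ≤ ∑ j ∈ T, φ (e j) :=
    Finset.single_le_sum (fun j _ => (hpos (e j)).le) hiT
  -- strictness case split on T.card
  rcases eq_or_lt_of_le (Nat.one_le_iff_ne_zero.mpr (Finset.card_ne_zero_of_mem hiT)) with hc | hc
  · -- T = {i}
    have hT1 : T = {i} := (Finset.card_eq_one.mp hc.symm).elim
      (fun a ha => by
        have : i = a := by have := hiT; rw [ha] at this; simpa using this
        rw [ha, this])
    rw [hT1]
    simp only [Finset.sum_singleton]
    exact phi_strictMono hn hpos hrap hlt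
  · -- T has ≥ 2 elements
    have h2 : φ (e i) < ∑ j ∈ T, φ (e j) := by
      rw [← Finset.add_sum_erase T _ hiT]
      have hne : (T.erase i).Nonempty := by
        rw [← Finset.card_pos, Finset.card_erase_of_mem hiT]; omega
      have : 0 < ∑ j ∈ T.erase i, φ (e j) :=
        Finset.sum_pos (fun j _ => hpos (e j)) hne
      linarith
    calc ∑ j ∈ T, φ (d j) ≤ (T.card : ℝ) * φ (d i) := hdsum
      _ ≤ (n : ℝ) * φ (d i) := by
          apply mul_le_mul_of_nonneg_right _ (hpos _).le; exact_mod_cast hcard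
      _ ≤ φ (e i) := hstep
      _ < _ := h2

end

lemma decLE_total {n : ℕ} (x y : Fin n → ℤ) : decLE x y ∨ decLT y x := by
  by_cases h : sortDesc x = sortDesc y
  · exact Or.inl (Or.inl h)
  · set s := univ.filter (fun i => sortDesc x i ≠ sortDesc y i) with hs
    have hne : s.Nonempty := by
      rw [Finset.filter_nonempty_iff]
      obtain ⟨i, hi⟩ := Function.ne_iff.mp h
      exact ⟨i, Finset.mem_univ i, hi⟩
    set i := s.min' hne with hi
    have hiS : sortDesc x i ≠ sortDesc y i := by
      have := s.min'_mem hne; simpa [hs] using this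
    have heq : ∀ j, j < i → sortDesc x j = sortDesc y j := by
      intro j hj
      by_contra hc
      have : i ≤ j := s.min'_le j (by simpa [hs] using hc)
      exact absurd hj (not_lt.mpr this)
    rcases lt_or_gt_of_ne hiS with hlt | hgt
    · exact Or.inl (Or.inr ⟨i, heq, hlt⟩)
    · exact Or.inr ⟨i, fun j hj => (heq j hj).symm, hgt⟩

theorem decmin_eq_argmin_rapid (n : ℕ) (hn : 2 ≤ n) (S : Set (Fin n → ℤ)) (φ : ℤ → ℝ)
    (hpos : ∀ k : ℤ, 0 < φ k)
    (hrap : ∀ k : ℤ, (n : ℝ) * φ k ≤ φ (k + 1)) :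
    {x | DecMin S x} = {x ∈ S | ∀ y ∈ S, ∑ i, φ (x i) ≤ ∑ i, φ (y i)} := by
  ext x
  simp only [Set.mem_setOf_eq, Set.mem_sep_iff, DecMin]
  constructor
  · rintro ⟨hx, hmin⟩
    refine ⟨hx, fun y hy => ?_⟩
    rcases hmin y hy with heq | hlt
    · rw [← sum_sortDesc x φ, ← sum_sortDesc y φ, heq]
    · exact (sum_lt_of_decLT hn hpos hrap hlt).le
  · rintro ⟨hx, hmin⟩
    refine ⟨hx, fun y hy => ?_⟩
    rcases decLE_total x y with h | h
    · exact h
    · exact absurd (hmin y hy) (not_le.mpr (sum_lt_of_decLT hn hpos hrap h))
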